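/- arXiv:1612.01573 — 3 statements merged into one kernel-verified Lean document; each statement's English description precedes it below -/
import Mathlib

section
/- Let (Xₙ)_{n≥0} be a Galton–Watson branching process with X₀ = 1, offspring mean μ = E[X₁] ∈ (0,1], and offspring generating function f. Set pₙ = P(Xₙ ≥ 1). Then lim_{n→∞} pₙ₊₁/pₙ = μ, provided either P(X₁ = 1) < 1 or μ = 1 with pₙ = 1 for all n (in which case the limit is trivially 1 = μ). -/
open Filter MeasureTheory ProbabilityTheory
open scoped ENNReal

/-- Geometric sum identity. -/
private lemma gw_geom (s : ℝ) (k : ℕ) :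
    (1 - s) * ∑ j ∈ Finset.range k, s ^ j = 1 - s ^ k := by
  have h := geom_sum_mul s k
  linear_combination -h

private lemma gw_le (s : ℝ) (h0 : 0 ≤ s) (h1 : s ≤ 1) (k : ℕ) :
    1 - s ^ k ≤ k * (1 - s) := by
  rw [← gw_geom]
  have hsum : ∑ j ∈ Finset.range k, s ^ j ≤ (k : ℝ) := by
    calc ∑ j ∈ Finset.range k, s ^ j ≤ ∑ j ∈ Finset.range k, (1 : ℝ) :=
          Finset.sum_le_sum fun j _ => pow_le_one₀ h0 h1
    _ = k := by simp
  calc (1 - s) * ∑ j ∈ Finset.range k, s ^ j ≤ (1 - s) * k :=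
        mul_le_mul_of_nonneg_left hsum (by linarith)
  _ = k * (1 - s) := by ring

private lemma gw_lt (s : ℝ) (h0 : 0 ≤ s) (h1 : s < 1) (k : ℕ) (hk : 2 ≤ k) :
    1 - s ^ k < k * (1 - s) := by
  rw [← gw_geom]
  have hsum : ∑ j ∈ Finset.range k, s ^ j < (k : ℝ) := by
    have : ∑ j ∈ Finset.range k, s ^ j < ∑ j ∈ Finset.range k, (1 : ℝ) := by
      refine Finset.sum_lt_sum (fun j _ => pow_le_one₀ h0 h1.le) ⟨1, ?_, ?_⟩
      · exact Finset.mem_range.2 (by omega)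
      · simpa using h1
    simpa using this
  calc (1 - s) * ∑ j ∈ Finset.range k, s ^ j < (1 - s) * k :=
        mul_lt_mul_of_pos_left hsum (by linarith)
  _ = k * (1 - s) := by ring

/-- For a Galton–Watson process with `X₀ = 1` and offspring mean `μ ∈ (0,1]`,
the survival probabilities `pₙ = P(Xₙ ≥ 1)` satisfy `pₙ₊₁/pₙ → μ`, provided either
`P(X₁ = 1) < 1` or `μ = 1` with `pₙ = 1` for all `n`. -/
theorem gw_survival_probability_ratio {Ω : Type*} [MeasureSpace Ω]
    [IsProbabilityMeasure (ℙ : Measure Ω)]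
    (ξ : ℕ → ℕ → Ω → ℕ) (hξm : ∀ n i, Measurable (ξ n i))
    (hindep : iIndepFun (fun p : ℕ × ℕ => ξ p.1 p.2) ℙ)
    (hident : ∀ n i, IdentDistrib (ξ n i) (ξ 0 0) ℙ ℙ)
    (X : ℕ → Ω → ℕ)
    (hX0 : ∀ ω, X 0 ω = 1)
    (hXrec : ∀ n ω, X (n + 1) ω = ∑ i ∈ Finset.range (X n ω), ξ n i ω)
    (hintξ : Integrable (fun ω => (ξ 0 0 ω : ℝ)) ℙ)
    (μ : ℝ) (hμ : μ = ∫ ω, (ξ 0 0 ω : ℝ)) (hμmem : μ ∈ Set.Ioc (0 : ℝ) 1)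
    (hcase : ℙ {ω | ξ 0 0 ω = 1} < 1 ∨
      (μ = 1 ∧ ∀ n, ℙ {ω | 1 ≤ X n ω} = 1)) :
    Tendsto (fun n : ℕ =>
        (ℙ {ω | 1 ≤ X (n + 1) ω}).toReal / (ℙ {ω | 1 ≤ X n ω}).toReal)
      atTop (nhds μ) := by
  obtain ⟨hμpos, hμle⟩ := hμmem
  rcases hcase with hcase | ⟨hμ1, hall⟩
  case inr =>
    have h1 : ∀ n, (ℙ {ω | 1 ≤ X n ω}).toReal = 1 := fun n => by
      rw [hall n]; simp
    have : (fun n : ℕ =>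
        (ℙ {ω | 1 ≤ X (n + 1) ω}).toReal / (ℙ {ω | 1 ≤ X n ω}).toReal)
        = fun _ => (1 : ℝ) := by
      funext n; rw [h1 n, h1 (n + 1)]; norm_num
    rw [this, hμ1]
    exact tendsto_const_nhds
  -- Main case : ℙ {ξ = 1} < 1
  -- ## Part 1 : σ-algebras and independence
  set m0 : ℕ × ℕ → MeasurableSpace Ω :=
    fun p => MeasurableSpace.comap (ξ p.1 p.2) inferInstance with hm0
  have hle : ∀ p : ℕ × ℕ, m0 p ≤ _ := fun p => (hξm p.1 p.2).comap_le
  set mF : ℕ → MeasurableSpace Ω := fun n => ⨆ p ∈ {p : ℕ × ℕ | p.1 < n}, m0 p with hmF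
  set mG : ℕ → MeasurableSpace Ω := fun n => ⨆ p ∈ {p : ℕ × ℕ | p.1 = n}, m0 p with hmG
  have hiIndep : iIndep m0 ℙ := hindep
  have hmFle : ∀ n, mF n ≤ _ := fun n => iSup₂_le fun p _ => hle p
  have hmGle : ∀ n, mG n ≤ _ := fun n => iSup₂_le fun p _ => hle p
  have hIndep1 : ∀ n, Indep (mF n) (mG n) ℙ := by
    intro n
    refine indep_iSup_of_disjoint hle hiIndep ?_
    rw [Set.disjoint_left]
    rintro ⟨a, b⟩ h1 h2
    simp only [Set.mem_setOf_eq] at h1 h2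
    omega
  have hIndep2 : ∀ n k : ℕ,
      Indep (⨆ p ∈ {p : ℕ × ℕ | p.1 = n ∧ p.2 < k}, m0 p) (m0 (n, k)) ℙ := by
    intro n k
    have h := indep_iSup_of_disjoint (S := {p : ℕ × ℕ | p.1 = n ∧ p.2 < k})
      (T := {(n, k)}) hle hiIndep ?_
    · simpa using h
    · rw [Set.disjoint_left]
      rintro ⟨a, b⟩ h1 h2
      simp only [Set.mem_setOf_eq] at h1
      simp only [Set.mem_singleton_iff, Prod.mk.injEq] at h2
      omega
  -- measurability of ξ n i w.r.t. sub-σ-algebras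
  have hrowG : ∀ n i, Measurable[mG n] (ξ n i) := by
    intro n i
    have hle' : m0 (n, i) ≤ mG n :=
      le_biSup m0 (show ((n, i) : ℕ × ℕ) ∈ {p : ℕ × ℕ | p.1 = n} from rfl)
    exact Measurable.of_comap_le hle'
  -- measurability of X n
  have hXmF : ∀ n, Measurable[mF n] (X n) := by
    intro n
    induction n with
    | zero =>
      have : X 0 = fun _ => 1 := funext hX0
      rw [this]; exact measurable_const
    | succ n ih =>
      have hmono : mF n ≤ mF (n + 1) := by
        refine iSup₂_le fun p hp => ?_
        exact le_biSup m0 (show p ∈ {p : ℕ × ℕ | p.1 < n + 1} from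
          Set.mem_setOf_eq ▸ Nat.lt_succ_of_lt hp)
      have hsum : ∀ m : ℕ, Measurable[mF (n + 1)]
          (fun ω => ∑ i ∈ Finset.range m, ξ n i ω) := by
        intro m
        refine Finset.measurable_sum _ fun i _ => ?_
        exact Measurable.of_comap_le (le_biSup m0
          (show ((n, i) : ℕ × ℕ) ∈ {p : ℕ × ℕ | p.1 < n + 1} from Nat.lt_succ_self n))
      refine @measurable_to_countable' ℕ Ω _ _ (mF (n + 1)) _ fun k => ?_
      have hset : X (n + 1) ⁻¹' {k} =
          ⋃ m, (X n ⁻¹' {m}) ∩ ((fun ω => ∑ i ∈ Finset.range m, ξ n i ω) ⁻¹' {k}) := by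
        ext ω
        simp only [Set.mem_preimage, Set.mem_singleton_iff, Set.mem_iUnion, Set.mem_inter_iff,
          hXrec n ω]
        constructor
        · intro h; exact ⟨X n ω, rfl, h⟩
        · rintro ⟨m, rfl, h⟩; exact h
      rw [hset]
      exact MeasurableSet.iUnion fun m =>
        ((ih.mono hmono le_rfl) (measurableSet_singleton m)).inter
          ((hsum m) (measurableSet_singleton k))
  have hXm : ∀ n, Measurable (X n) := fun n => (hXmF n).mono (hmFle n) le_rfl
  -- ## Part 2 : generating function recursion (in ℝ≥0∞)
  set F : ℝ≥0∞ → ℝ≥0∞ := fun c => ∫⁻ ω, c ^ ξ 0 0 ω ∂ℙ with hF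
  have hcomp : ∀ (Y : Ω → ℕ), Measurable Y → ∀ φ : ℕ → ℝ≥0∞,
      ∫⁻ ω, φ (Y ω) ∂ℙ = ∑' k, φ k * ℙ (Y ⁻¹' {k}) := by
    intro Y hY φ
    rw [← lintegral_map (measurable_of_countable φ) hY, lintegral_countable']
    congr 1; ext k; rw [Measure.map_apply hY (measurableSet_singleton k)]
  have hFrow : ∀ (n i : ℕ) (c : ℝ≥0∞), ∫⁻ ω, c ^ ξ n i ω ∂ℙ = F c := by
    intro n i c
    calc ∫⁻ ω, c ^ ξ n i ω ∂ℙ = ∫⁻ m, c ^ m ∂(Measure.map (ξ n i) ℙ) :=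
          (lintegral_map (measurable_of_countable _) (hξm n i)).symm
    _ = ∫⁻ m, c ^ m ∂(Measure.map (ξ 0 0) ℙ) := by rw [(hident n i).map_eq]
    _ = F c := lintegral_map (measurable_of_countable _) (hξm 0 0)
  have hprod : ∀ (n k : ℕ) (c : ℝ≥0∞),
      ∫⁻ ω, ∏ i ∈ Finset.range k, c ^ ξ n i ω ∂ℙ = F c ^ k := by
    intro n k c
    induction k with
    | zero => simp
    | succ k ih =>
      have heq : (fun ω => ∏ i ∈ Finset.range (k + 1), c ^ ξ n i ω)
          = fun ω => (∏ i ∈ Finset.range k, c ^ ξ n i ω) * c ^ ξ n k ω :=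
        funext fun ω => Finset.prod_range_succ _ _
      rw [heq, lintegral_mul_eq_lintegral_mul_lintegral_of_independent_measurableSpace
        (iSup₂_le fun p _ => hle p) (hle (n, k)) (hIndep2 n k) ?_ ?_, ih, hFrow, pow_succ]
      · refine Finset.measurable_prod _ fun i hi => ?_
        refine (measurable_of_countable fun m => c ^ m).comp ?_
        exact Measurable.of_comap_le (le_biSup m0
          (show ((n, i) : ℕ × ℕ) ∈ {p : ℕ × ℕ | p.1 = n ∧ p.2 < k} from
            ⟨rfl, Finset.mem_range.1 hi⟩))
      · exact (measurable_of_countable fun m => c ^ m).comp (Measurable.of_comap_le le_rfl)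
  have hstep : ∀ (n : ℕ) (c : ℝ≥0∞), ∫⁻ ω, c ^ X (n + 1) ω ∂ℙ = ∫⁻ ω, F c ^ X n ω ∂ℙ := by
    intro n c
    have hdisj : Pairwise (Function.onFun Disjoint fun k : ℕ => X n ⁻¹' {k}) := by
      intro i j hij
      rw [Function.onFun, Set.disjoint_left]
      intro ω hi hj
      simp only [Set.mem_preimage, Set.mem_singleton_iff] at hi hj
      exact hij (hi ▸ hj ▸ rfl)
    have hcover : ⋃ k : ℕ, X n ⁻¹' {k} = Set.univ := by
      ext ω; simp
    have hterm : ∀ k : ℕ, ∫⁻ ω in X n ⁻¹' {k}, c ^ X (n + 1) ω ∂ℙ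
        = F c ^ k * ℙ (X n ⁻¹' {k}) := by
      intro k
      have hsk : MeasurableSet (X n ⁻¹' {k}) := hXm n (measurableSet_singleton k)
      have heq : ∀ ω ∈ X n ⁻¹' {k},
          c ^ X (n + 1) ω = ∏ i ∈ Finset.range k, c ^ ξ n i ω := by
        intro ω hω
        simp only [Set.mem_preimage, Set.mem_singleton_iff] at hω
        rw [hXrec n ω, hω, Finset.prod_pow_eq_pow_sum]
      rw [setLIntegral_congr_fun hsk heq]
      have hind : ∫⁻ ω in X n ⁻¹' {k}, ∏ i ∈ Finset.range k, c ^ ξ n i ω ∂ℙ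
          = ∫⁻ ω, (X n ⁻¹' {k}).indicator (1 : Ω → ℝ≥0∞) ω
              * ∏ i ∈ Finset.range k, c ^ ξ n i ω ∂ℙ := by
        rw [← lintegral_indicator hsk]
        congr 1; funext ω
        by_cases hω : ω ∈ X n ⁻¹' {k} <;>
          simp [Set.indicator_of_mem, Set.indicator_of_notMem, hω]
      rw [hind, lintegral_mul_eq_lintegral_mul_lintegral_of_independent_measurableSpace
        (hmFle n) (hmGle n) (hIndep1 n) ?_ ?_, hprod, lintegral_indicator_one hsk, mul_comm]
      · exact (@measurable_one ℝ≥0∞ Ω _ (mF n) _).indicator ((hXmF n) (measurableSet_singleton k))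
      · refine Finset.measurable_prod _ fun i _ => ?_
        exact (measurable_of_countable fun m => c ^ m).comp (hrowG n i)
    calc ∫⁻ ω, c ^ X (n + 1) ω ∂ℙ = ∫⁻ ω in ⋃ k : ℕ, X n ⁻¹' {k}, c ^ X (n + 1) ω ∂ℙ := by
          rw [hcover, setLIntegral_univ]
    _ = ∑' k : ℕ, ∫⁻ ω in X n ⁻¹' {k}, c ^ X (n + 1) ω ∂ℙ :=
          lintegral_iUnion (fun k => hXm n (measurableSet_singleton k)) hdisj _
    _ = ∑' k : ℕ, F c ^ k * ℙ (X n ⁻¹' {k}) := by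
          congr 1; funext k; exact hterm k
    _ = ∫⁻ ω, F c ^ X n ω ∂ℙ := (hcomp (X n) (hXm n) fun k => F c ^ k).symm
  have hG : ∀ (n : ℕ) (c : ℝ≥0∞), ∫⁻ ω, c ^ X n ω ∂ℙ = F^[n] c := by
    intro n
    induction n with
    | zero =>
      intro c
      simp only [hX0, pow_one, lintegral_const, Function.iterate_zero, id_eq]
      rw [measure_univ, mul_one]
    | succ n ih =>
      intro c
      rw [hstep n c, ih (F c), ← Function.iterate_succ_apply]
  have hQval : ∀ n, ℙ (X n ⁻¹' {0}) = F^[n] 0 := by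
    intro n
    rw [← hG n 0, hcomp (X n) (hXm n) fun k => (0 : ℝ≥0∞) ^ k]
    rw [tsum_eq_single 0 ?_]
    · simp
    · intro k hk; simp [zero_pow hk]
  have hQrec : ∀ n, ℙ (X (n + 1) ⁻¹' {0}) = F (ℙ (X n ⁻¹' {0})) := by
    intro n
    rw [hQval, hQval, Function.iterate_succ_apply']
  -- ## Part 3 : bridge to real numbers
  set s : ℕ → ℝ := fun n => (ℙ (X n ⁻¹' {0})).toReal with hs
  set φ : ℝ → ℝ := fun t => ∫ ω, t ^ ξ 0 0 ω ∂ℙ with hφ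
  have hmeaspow : ∀ t : ℝ, AEStronglyMeasurable (fun ω => t ^ ξ 0 0 ω) ℙ :=
    fun t => ((measurable_of_countable fun k => t ^ k).comp (hξm 0 0)).aestronglyMeasurable
  have hintpow : ∀ t : ℝ, 0 ≤ t → t ≤ 1 → Integrable (fun ω => t ^ ξ 0 0 ω) ℙ := by
    intro t h0 h1
    refine Integrable.mono' (integrable_const 1) (hmeaspow t) (ae_of_all _ fun ω => ?_)
    rw [Real.norm_eq_abs, abs_of_nonneg (pow_nonneg h0 _)]
    exact pow_le_one₀ h0 h1
  have hQtop : ∀ n, ℙ (X n ⁻¹' {0}) ≠ ⊤ := fun n => measure_ne_top _ _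
  have hFbridge : ∀ t : ℝ, 0 ≤ t → t ≤ 1 →
      F (ENNReal.ofReal t) = ENNReal.ofReal (φ t) := by
    intro t h0 h1
    have : ∀ ω, (ENNReal.ofReal t) ^ ξ 0 0 ω = ENNReal.ofReal (t ^ ξ 0 0 ω) :=
      fun ω => (ENNReal.ofReal_pow h0 _).symm
    rw [hF]
    simp only [this]
    rw [← ofReal_integral_eq_lintegral_ofReal (hintpow t h0 h1)
      (ae_of_all _ fun ω => pow_nonneg h0 _)]
  -- ## Part 4 : real analysis
  have hs0 : ∀ n, 0 ≤ s n := fun n => ENNReal.toReal_nonneg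
  have hsle1 : ∀ n, s n ≤ 1 := by
    intro n
    have : (ℙ (X n ⁻¹' {0})).toReal ≤ (1 : ℝ≥0∞).toReal :=
      ENNReal.toReal_mono ENNReal.one_ne_top prob_le_one
    simpa [hs] using this
  have hofReal : ∀ n, ENNReal.ofReal (s n) = ℙ (X n ⁻¹' {0}) := fun n =>
    ENNReal.ofReal_toReal (hQtop n)
  have hφ0 : ∀ t : ℝ, 0 ≤ t → 0 ≤ φ t := fun t ht =>
    integral_nonneg fun ω => pow_nonneg ht _
  have hsrec : ∀ n, s (n + 1) = φ (s n) := by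
    intro n
    have h1 : ℙ (X (n + 1) ⁻¹' {0}) = ENNReal.ofReal (φ (s n)) := by
      rw [hQrec n, ← hofReal n, hFbridge (s n) (hs0 n) (hsle1 n)]
    rw [hs]
    simp only [h1, ENNReal.toReal_ofReal (hφ0 _ (hs0 n))]
    rfl
  have hs00 : s 0 = 0 := by
    have h : X 0 ⁻¹' {0} = ∅ := by
      ext ω; simp [hX0 ω]
    simp [hs, h]
  have hφmono : ∀ a b : ℝ, 0 ≤ a → a ≤ b → b ≤ 1 → φ a ≤ φ b := by
    intro a b ha hab hb1
    exact integral_mono (hintpow a ha (hab.trans hb1)) (hintpow b (ha.trans hab) hb1)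
      fun ω => pow_le_pow_left₀ ha hab _
  -- positivity of survival
  have hA : MeasurableSet {ω | ξ 0 0 ω = 0} := hξm 0 0 (measurableSet_singleton 0)
  have hAc : {ω | ξ 0 0 ω = 0}ᶜ = {ω | 1 ≤ ξ 0 0 ω} := by
    ext ω; simp [Nat.one_le_iff_ne_zero]
  have hposξ : ℙ {ω | 1 ≤ ξ 0 0 ω} ≠ 0 := by
    intro h0
    have hae : (fun ω => (ξ 0 0 ω : ℝ)) =ᵐ[ℙ] 0 := by
      rw [Filter.EventuallyEq, ae_iff]
      convert h0 using 2
      ext ω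
      simp [Nat.one_le_iff_ne_zero]
    have : μ = 0 := by
      rw [hμ, integral_congr_ae hae]
      simp
    linarith
  have hQA1 : ℙ {ω | ξ 0 0 ω = 0} < 1 := by
    rcases lt_or_ge (ℙ {ω | ξ 0 0 ω = 0}) 1 with h | h
    · exact h
    · exfalso
      have h1' : ℙ {ω | ξ 0 0 ω = 0} ≤ 1 := prob_le_one (μ := ℙ)
      have h1 : ℙ {ω | ξ 0 0 ω = 0} = 1 := le_antisymm h1' h
      have h2 := prob_compl_eq_one_sub (μ := ℙ) hA
      rw [h1, hAc] at h2
      simp at h2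
      exact hposξ h2
  have ha1 : (ℙ {ω | ξ 0 0 ω = 0}).toReal < 1 := by
    have := (ENNReal.toReal_lt_toReal (measure_ne_top _ _) ENNReal.one_ne_top).2 hQA1
    simpa using this
  have hφlt1 : ∀ t : ℝ, 0 ≤ t → t < 1 → φ t < 1 := by
    intro t h0 h1
    have hbound : ∀ ω, t ^ ξ 0 0 ω ≤ t + {ω | ξ 0 0 ω = 0}.indicator (fun _ => 1 - t) ω := by
      intro ω
      by_cases hω : ω ∈ {ω | ξ 0 0 ω = 0}
      · have hz : ξ 0 0 ω = 0 := hω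
        rw [hz, pow_zero, Set.indicator_of_mem hω]
        linarith
      · have hωn : ξ 0 0 ω ≠ 0 := hω
        rw [Set.indicator_of_notMem hω]
        have h2 : t ^ ξ 0 0 ω ≤ t ^ 1 :=
          pow_le_pow_of_le_one h0 h1.le (Nat.one_le_iff_ne_zero.2 hωn)
        rw [pow_one] at h2
        linarith
    have hintind : Integrable ({ω | ξ 0 0 ω = 0}.indicator fun _ => (1 - t : ℝ)) ℙ :=
      (integrable_const _).indicator hA
    have hφle : φ t ≤ t + (1 - t) * (ℙ {ω | ξ 0 0 ω = 0}).toReal := by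
      calc φ t ≤ ∫ ω, (t + {ω | ξ 0 0 ω = 0}.indicator (fun _ => 1 - t) ω) ∂ℙ :=
            integral_mono (hintpow t h0 h1.le) ((integrable_const t).add hintind) hbound
      _ = t + (1 - t) * (ℙ {ω | ξ 0 0 ω = 0}).toReal := by
          rw [integral_add (integrable_const t) hintind, integral_const,
            integral_indicator_const _ hA]
          simp [mul_comm, measureReal_def]
    have hlt : (1 - t) * (ℙ {ω | ξ 0 0 ω = 0}).toReal < (1 - t) * 1 :=
      mul_lt_mul_of_pos_left ha1 (by linarith)
    rw [mul_one] at hlt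
    linarith
  have hslt1 : ∀ n, s n < 1 := by
    intro n
    induction n with
    | zero => rw [hs00]; norm_num
    | succ n ih => rw [hsrec n]; exact hφlt1 (s n) (hs0 n) ih
  have hsmono : Monotone s := by
    refine monotone_nat_of_le_succ ?_
    intro n
    induction n with
    | zero => rw [hs00]; exact hs0 1
    | succ n ih =>
      calc s (n + 1) = φ (s n) := hsrec n
      _ ≤ φ (s (n + 1)) := hφmono (s n) (s (n + 1)) (hs0 n) ih (hsle1 (n + 1))
      _ = s (n + 2) := (hsrec (n + 1)).symm
  have hbdd : BddAbove (Set.range s) := ⟨1, by rintro x ⟨n, rfl⟩; exact (hslt1 n).le⟩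
  set L : ℝ := ⨆ n, s n with hLdef
  have htendL : Tendsto s atTop (nhds L) := tendsto_atTop_ciSup hsmono hbdd
  have hL0 : 0 ≤ L := le_trans (hs0 0) (le_ciSup hbdd 0)
  have hLle1 : L ≤ 1 := ciSup_le fun n => (hslt1 n).le
  have hφtendL : Tendsto (fun n => φ (s n)) atTop (nhds (φ L)) := by
    refine integral_tendsto_of_tendsto_of_monotone
      (fun n => hintpow (s n) (hs0 n) (hsle1 n)) (hintpow L hL0 hLle1) ?_ ?_
    · exact ae_of_all _ fun ω n m hnm => pow_le_pow_left₀ (hs0 n) (hsmono hnm) _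
    · exact ae_of_all _ fun ω => htendL.pow _
  have hφL : φ L = L := by
    have h1 : Tendsto (fun n => s (n + 1)) atTop (nhds L) :=
      htendL.comp (tendsto_add_atTop_nat 1)
    have h2 : (fun n => s (n + 1)) = fun n => φ (s n) := funext hsrec
    rw [h2] at h1
    exact tendsto_nhds_unique hφtendL h1
  -- strict inequality : t < φ t for t ∈ [0,1)
  have hφgt : ∀ t : ℝ, 0 ≤ t → t < 1 → t < φ t := by
    intro t h0 h1
    have hkey : ∀ ω, 1 - t ^ ξ 0 0 ω ≤ (ξ 0 0 ω : ℝ) * (1 - t) := fun ω =>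
      gw_le t h0 h1.le _
    have hint1 : Integrable (fun ω => 1 - t ^ ξ 0 0 ω) ℙ :=
      (integrable_const 1).sub (hintpow t h0 h1.le)
    have hint2 : Integrable (fun ω => (ξ 0 0 ω : ℝ) * (1 - t)) ℙ := hintξ.mul_const _
    have hval1 : ∫ ω, (1 - t ^ ξ 0 0 ω) ∂ℙ = 1 - φ t := by
      rw [integral_sub (integrable_const 1) (hintpow t h0 h1.le)]
      simp [hφ]
    have hval2 : ∫ ω, (ξ 0 0 ω : ℝ) * (1 - t) ∂ℙ = μ * (1 - t) := by
      rw [integral_mul_const, hμ]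
    rcases lt_or_eq_of_le hμle with hμlt | hμeq
    · have hle' : 1 - φ t ≤ μ * (1 - t) := by
        rw [← hval1, ← hval2]
        exact integral_mono hint1 hint2 hkey
      nlinarith
    · -- μ = 1
      have h2pos : ℙ {ω | 2 ≤ ξ 0 0 ω} ≠ 0 := by
        intro hz
        have hae : ∀ᵐ ω ∂ℙ, ξ 0 0 ω ≤ 1 := by
          rw [ae_iff]
          convert hz using 2
          ext ω
          simp only [Set.mem_setOf_eq, not_le]
          omega
        have hmeas1 : MeasurableSet {ω | ξ 0 0 ω = 1} := hξm 0 0 (measurableSet_singleton 1)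
        have hae2 : (fun ω => (ξ 0 0 ω : ℝ))
            =ᵐ[ℙ] {ω | ξ 0 0 ω = 1}.indicator (fun _ => (1 : ℝ)) := by
          filter_upwards [hae] with ω hω
          interval_cases h : ξ 0 0 ω
          · simp [Set.indicator_of_notMem, Set.mem_setOf_eq, h]
          · simp [Set.indicator_of_mem, Set.mem_setOf_eq, h]
        have hμval : μ = (ℙ {ω | ξ 0 0 ω = 1}).toReal := by
          rw [hμ, integral_congr_ae hae2, integral_indicator_const _ hmeas1]
          simp [measureReal_def]
        have hlt1 : (ℙ {ω | ξ 0 0 ω = 1}).toReal < 1 := by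
          have := (ENNReal.toReal_lt_toReal (measure_ne_top _ _) ENNReal.one_ne_top).2 hcase
          simpa using this
        rw [← hμeq] at hlt1
        rw [hμval] at hlt1
        exact lt_irrefl _ hlt1
      have hsupp : {ω | 2 ≤ ξ 0 0 ω} ⊆
          Function.support (fun ω => (ξ 0 0 ω : ℝ) * (1 - t) - (1 - t ^ ξ 0 0 ω)) := by
        intro ω hω
        have hstrict := gw_lt t h0 h1 (ξ 0 0 ω) hω
        simp only [Function.mem_support]
        exact ne_of_gt (by linarith)
      have hd : Integrable (fun ω => (ξ 0 0 ω : ℝ) * (1 - t) - (1 - t ^ ξ 0 0 ω)) ℙ :=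
        hint2.sub hint1
      have hpos : 0 < ∫ ω, ((ξ 0 0 ω : ℝ) * (1 - t) - (1 - t ^ ξ 0 0 ω)) ∂ℙ := by
        rw [integral_pos_iff_support_of_nonneg_ae
          (ae_of_all _ fun ω => sub_nonneg.2 (hkey ω)) hd]
        calc (0 : ℝ≥0∞) < ℙ {ω | 2 ≤ ξ 0 0 ω} := pos_iff_ne_zero.2 h2pos
        _ ≤ ℙ (Function.support fun ω => (ξ 0 0 ω : ℝ) * (1 - t) - (1 - t ^ ξ 0 0 ω)) :=
              measure_mono hsupp
      have hvald : ∫ ω, ((ξ 0 0 ω : ℝ) * (1 - t) - (1 - t ^ ξ 0 0 ω)) ∂ℙ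
          = μ * (1 - t) - (1 - φ t) := by
        rw [integral_sub hint2 hint1, hval1, hval2]
      rw [hvald] at hpos
      rw [← hμeq] at hpos
      nlinarith
  have hL1 : L = 1 := by
    by_contra hne
    have hlt : L < 1 := lt_of_le_of_ne hLle1 hne
    have := hφgt L hL0 hlt
    rw [hφL] at this
    exact lt_irrefl L this
  -- relate the statement quantities to s
  have hp : ∀ n, (ℙ {ω | 1 ≤ X n ω}).toReal = 1 - s n := by
    intro n
    have hsets : {ω | 1 ≤ X n ω} = (X n ⁻¹' {0})ᶜ := by
      ext ω
      simp [Nat.one_le_iff_ne_zero]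
    rw [hsets, prob_compl_eq_one_sub (hXm n (measurableSet_singleton 0)),
      ENNReal.toReal_sub_of_le prob_le_one ENNReal.one_ne_top]
    simp [hs]
  have hintgeom : ∀ t : ℝ, 0 ≤ t → t ≤ 1 →
      Integrable (fun ω => ∑ j ∈ Finset.range (ξ 0 0 ω), t ^ j) ℙ := by
    intro t h0 h1
    refine Integrable.mono' hintξ
      ((measurable_of_countable fun k => ∑ j ∈ Finset.range k, t ^ j).comp
        (hξm 0 0)).aestronglyMeasurable (ae_of_all _ fun ω => ?_)
    rw [Real.norm_eq_abs, abs_of_nonneg (Finset.sum_nonneg fun j _ => pow_nonneg h0 _)]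
    calc ∑ j ∈ Finset.range (ξ 0 0 ω), t ^ j ≤ ∑ j ∈ Finset.range (ξ 0 0 ω), (1 : ℝ) :=
          Finset.sum_le_sum fun j _ => pow_le_one₀ h0 h1
    _ = (ξ 0 0 ω : ℝ) := by simp
  have hratio : ∀ t : ℝ, 0 ≤ t → t < 1 →
      (1 - φ t) / (1 - t) = ∫ ω, ∑ j ∈ Finset.range (ξ 0 0 ω), t ^ j ∂ℙ := by
    intro t h0 h1
    have hpt : (fun ω => 1 - t ^ ξ 0 0 ω)
        = fun ω => (1 - t) * ∑ j ∈ Finset.range (ξ 0 0 ω), t ^ j :=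
      funext fun ω => (gw_geom t _).symm
    have hkey : 1 - φ t = (1 - t) * ∫ ω, ∑ j ∈ Finset.range (ξ 0 0 ω), t ^ j ∂ℙ := by
      calc 1 - φ t = ∫ ω, (1 - t ^ ξ 0 0 ω) ∂ℙ := by
            rw [integral_sub (integrable_const 1) (hintpow t h0 h1.le)]
            simp [hφ]
      _ = ∫ ω, (1 - t) * ∑ j ∈ Finset.range (ξ 0 0 ω), t ^ j ∂ℙ := by rw [hpt]
      _ = (1 - t) * ∫ ω, ∑ j ∈ Finset.range (ξ 0 0 ω), t ^ j ∂ℙ := integral_const_mul _ _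
    rw [hkey, mul_comm, mul_div_assoc, div_self (by linarith : (1 : ℝ) - t ≠ 0), mul_one]
  have hfinal : Tendsto (fun n => ∫ ω, ∑ j ∈ Finset.range (ξ 0 0 ω), s n ^ j ∂ℙ)
      atTop (nhds μ) := by
    rw [hμ]
    refine integral_tendsto_of_tendsto_of_monotone
      (fun n => hintgeom (s n) (hs0 n) (hsle1 n)) hintξ ?_ ?_
    · exact ae_of_all _ fun ω n m hnm =>
        Finset.sum_le_sum fun j _ => pow_le_pow_left₀ (hs0 n) (hsmono hnm) _
    · refine ae_of_all _ fun ω => ?_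
      have hst1 : Tendsto s atTop (nhds 1) := hL1 ▸ htendL
      have hterm : ∀ j : ℕ, Tendsto (fun n => s n ^ j) atTop (nhds 1) := by
        intro j
        simpa using hst1.pow j
      have hsum := tendsto_finset_sum (Finset.range (ξ 0 0 ω)) fun j _ => hterm j
      simpa using hsum
  have hfun : (fun n : ℕ =>
      (ℙ {ω | 1 ≤ X (n + 1) ω}).toReal / (ℙ {ω | 1 ≤ X n ω}).toReal)
      = fun n => ∫ ω, ∑ j ∈ Finset.range (ξ 0 0 ω), s n ^ j ∂ℙ := by
    funext n
    rw [hp n, hp (n + 1), hsrec n, ← hratio (s n) (hs0 n) (hslt1 n)]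
  rw [hfun]
  exact hfinal
end

section
/- For a Galton–Watson process (Xₙ) with X₀ = 1 and mean μ ∈ (0,1], for every δ > 0 one has lim_{n→∞} e^{δn} μ^{-n} P(Xₙ ≥ 1) = ∞. -/
open Filter MeasureTheory ProbabilityTheory

lemma sum_ite_lt' {β : Type*} [AddCommMonoid β] {M y : ℕ} (hy : y ≤ M) (f : ℕ → β) :
    ∑ i ∈ Finset.range M, (if i < y then f i else 0) = ∑ i ∈ Finset.range y, f i := by
  rw [← Finset.sum_subset (Finset.range_subset_range.mpr hy)
    (fun i _ hi => if_neg (fun h => hi (Finset.mem_range.mpr h)))]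
  exact Finset.sum_congr rfl fun i hi => if_pos (Finset.mem_range.mp hi)

lemma indep_indepFun_of_measurable {Ω β γ : Type*} {mΩ : MeasurableSpace Ω}
    [MeasurableSpace β] [MeasurableSpace γ] {μ : Measure Ω}
    {mA mB : MeasurableSpace Ω} {f : Ω → β} {g : Ω → γ}
    (h : Indep mA mB μ) (hf : Measurable[mA] f) (hg : Measurable[mB] g) :
    IndepFun f g μ := by
  rw [IndepFun_iff_Indep]
  exact indep_of_indep_of_le_left
    (indep_of_indep_of_le_right h (measurable_iff_comap_le.mp hg))
    (measurable_iff_comap_le.mp hf)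

set_option maxHeartbeats 1000000 in
lemma gw_aux {Ω : Type*} [MeasureSpace Ω] [IsProbabilityMeasure (ℙ : Measure Ω)]
    (ξ : ℕ → ℕ → Ω → ℕ) (hξm : ∀ n i, Measurable (ξ n i))
    (hindep : iIndepFun (fun p : ℕ × ℕ => ξ p.1 p.2) ℙ)
    (hident : ∀ n i, IdentDistrib (ξ n i) (ξ 0 0) ℙ ℙ)
    (X : ℕ → Ω → ℕ) (hX0 : ∀ ω, X 0 ω = 1)
    (hXrec : ∀ n ω, X (n + 1) ω = ∑ i ∈ Finset.range (X n ω), ξ n i ω)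
    (K : ℕ) (hK : 1 ≤ K) (m t : ℝ)
    (hm : m = ∫ ω, ((min (ξ 0 0 ω) K : ℕ) : ℝ))
    (ht : t = ∫ ω, ((min (ξ 0 0 ω) K : ℕ) : ℝ) ^ 2)
    (hm0 : 0 < m) (hm1 : m ≤ 1) :
    ∀ n : ℕ, m ^ n / (1 + t * n / m) ≤ (ℙ {ω | 1 ≤ X n ω}).toReal := by
  classical
  -- the truncated process
  set Z : ℕ → ℕ → Ω → ℕ := fun n i ω => min (ξ n i ω) K with hZdef
  set Y : ℕ → Ω → ℕ := fun n => Nat.rec (motive := fun _ => Ω → ℕ) (fun _ => 1)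
    (fun n Yn ω => ∑ i ∈ Finset.range (Yn ω), Z n i ω) n with hYdef
  have hY0 : ∀ ω, Y 0 ω = 1 := fun _ => rfl
  have hYrec : ∀ n ω, Y (n + 1) ω = ∑ i ∈ Finset.range (Y n ω), Z n i ω := fun _ _ => rfl
  -- coupling : Y ≤ X
  have hYleX : ∀ n ω, Y n ω ≤ X n ω := by
    intro n
    induction n with
    | zero => intro ω; rw [hY0, hX0]
    | succ n ih =>
      intro ω
      rw [hYrec, hXrec]
      calc ∑ i ∈ Finset.range (Y n ω), Z n i ω
          ≤ ∑ i ∈ Finset.range (Y n ω), ξ n i ω :=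
            Finset.sum_le_sum fun i _ => min_le_left _ _
        _ ≤ ∑ i ∈ Finset.range (X n ω), ξ n i ω :=
            Finset.sum_le_sum_of_subset (Finset.range_subset_range.mpr (ih ω))
  -- bound : Y n ≤ K ^ n
  have hYbK : ∀ n ω, Y n ω ≤ K ^ n := by
    intro n
    induction n with
    | zero => intro ω; simp [hY0]
    | succ n ih =>
      intro ω
      rw [hYrec]
      calc ∑ i ∈ Finset.range (Y n ω), Z n i ω
          ≤ ∑ i ∈ Finset.range (Y n ω), K :=
            Finset.sum_le_sum fun i _ => min_le_right _ _
        _ = Y n ω * K := by simp [mul_comm]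
        _ ≤ K ^ n * K := Nat.mul_le_mul_right _ (ih ω)
        _ = K ^ (n + 1) := (pow_succ K n).symm
  have hYrec' : ∀ n ω, Y (n + 1) ω
      = ∑ i ∈ Finset.range (K ^ n), (if i < Y n ω then Z n i ω else 0) := by
    intro n ω
    rw [hYrec, sum_ite_lt' (hYbK n ω)]
  -- σ-algebras
  set mS : ℕ × ℕ → MeasurableSpace Ω := fun p =>
    MeasurableSpace.comap ((fun q : ℕ × ℕ => ξ q.1 q.2) p) inferInstance with hmSdef
  have h_le : ∀ p, mS p ≤ (inferInstance : MeasurableSpace Ω) := fun p => (hξm p.1 p.2).comap_le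
  set G : ℕ → MeasurableSpace Ω := fun n => ⨆ p ∈ {q : ℕ × ℕ | q.1 < n}, mS p with hGdef
  have hGle : ∀ n, G n ≤ (inferInstance : MeasurableSpace Ω) := fun n =>
    iSup₂_le fun p _ => h_le p
  have hGmono : ∀ n, G n ≤ G (n + 1) := fun n =>
    biSup_mono (fun p hp => Nat.lt_succ_of_lt hp)
  have hmSle : ∀ n i, mS (n, i) ≤ G (n + 1) :=
    fun n i => le_biSup mS (show ((n, i) : ℕ × ℕ).1 < n + 1 by simp)
  have hξmS : ∀ n i, Measurable[mS (n, i)] (ξ n i) := fun n i =>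
    measurable_iff_comap_le.mpr le_rfl
  have hZmS : ∀ n i, Measurable[mS (n, i)] (Z n i) := fun n i =>
    (measurable_from_top (f := fun k : ℕ => min k K)).comp (hξmS n i)
  -- measurability of Y
  have hYmG : ∀ n, Measurable[G n] (Y n) := by
    intro n
    induction n with
    | zero => exact @measurable_const _ _ _ (G 0) _
    | succ n ih =>
      have hfe : Y (n + 1) = fun ω =>
          ∑ i ∈ Finset.range (K ^ n), (if i < Y n ω then Z n i ω else 0) :=
        funext (hYrec' n)
      rw [hfe]
      refine Finset.measurable_sum _ (fun i _ => Measurable.ite ?_ ?_ measurable_const)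
      · exact hGmono n _ (ih (show MeasurableSet {k : ℕ | i < k} from trivial))
      · exact (hZmS n i).mono (hmSle n i) le_rfl
  have hYm : ∀ n, Measurable (Y n) := fun n => (hYmG n).mono (hGle n) le_rfl
  -- real-valued versions
  set Yr : ℕ → Ω → ℝ := fun n ω => (Y n ω : ℝ) with hYrdef
  set Zr : ℕ → ℕ → Ω → ℝ := fun n i ω => (Z n i ω : ℝ) with hZrdef
  have hYrm : ∀ n, Measurable (Yr n) := fun n => measurable_from_top.comp (hYm n)
  have hZrmS : ∀ n i, Measurable[mS (n, i)] (Zr n i) := fun n i =>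
    (measurable_from_top (f := fun k : ℕ => ((min k K : ℕ) : ℝ))).comp (hξmS n i)
  have hZrm : ∀ n i, Measurable (Zr n i) := fun n i => (hZrmS n i).mono (h_le (n, i)) le_rfl
  have hZr2mS : ∀ n i, Measurable[mS (n, i)] (fun ω => Zr n i ω ^ 2) := fun n i =>
    (measurable_from_top (f := fun k : ℕ => ((min k K : ℕ) : ℝ) ^ 2)).comp (hξmS n i)
  -- integrability helper
  have hInt : ∀ (f : Ω → ℝ) (C : ℝ), Measurable f → (∀ ω, |f ω| ≤ C) → Integrable f ℙ :=
    fun f C hf hb => (integrable_const C).mono' hf.aestronglyMeasurable (ae_of_all _ hb)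
  have hYrb : ∀ n ω, |Yr n ω| ≤ (K : ℝ) ^ n := by
    intro n ω
    have h1 : (Y n ω : ℝ) ≤ (K : ℝ) ^ n := by exact_mod_cast hYbK n ω
    rw [show Yr n ω = (Y n ω : ℝ) from rfl, abs_of_nonneg (Nat.cast_nonneg _)]
    exact h1
  have hYint : ∀ n, Integrable (Yr n) ℙ := fun n => hInt _ _ (hYrm n) (hYrb n)
  have hY2int : ∀ n, Integrable (fun ω => Yr n ω ^ 2) ℙ := fun n =>
    hInt _ (((K : ℝ) ^ n) ^ 2) ((hYrm n).pow measurable_const) (fun ω => by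
      rw [abs_pow]
      exact pow_le_pow_left₀ (abs_nonneg _) (hYrb n ω) 2)
  have hZrb : ∀ n i ω, |Zr n i ω| ≤ (K : ℝ) := by
    intro n i ω
    have h1 : (Z n i ω : ℝ) ≤ (K : ℝ) := by
      exact_mod_cast (min_le_right (ξ n i ω) K : Z n i ω ≤ K)
    rw [show Zr n i ω = (Z n i ω : ℝ) from rfl, abs_of_nonneg (Nat.cast_nonneg _)]
    exact h1
  have hZint : ∀ n i, Integrable (Zr n i) ℙ := fun n i => hInt _ _ (hZrm n i) (hZrb n i)
  have hZ2int : ∀ n i, Integrable (fun ω => Zr n i ω ^ 2) ℙ := fun n i =>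
    hInt _ ((K : ℝ) ^ 2) ((hZrm n i).pow measurable_const) (fun ω => by
      rw [abs_pow]
      exact pow_le_pow_left₀ (abs_nonneg _) (hZrb n i ω) 2)
  -- moments of Z via identical distribution
  have hZmean : ∀ n i, ∫ ω, Zr n i ω = m := by
    intro n i
    rw [hm]
    exact ((hident n i).comp (measurable_from_top (f := fun k : ℕ => ((min k K : ℕ) : ℝ)))).integral_eq
  have hZsq : ∀ n i, ∫ ω, Zr n i ω ^ 2 = t := by
    intro n i
    rw [ht]
    exact ((hident n i).comp
      (measurable_from_top (f := fun k : ℕ => ((min k K : ℕ) : ℝ) ^ 2))).integral_eq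
  have ht0 : 0 ≤ t := by
    rw [ht]; exact integral_nonneg fun ω => sq_nonneg _
  -- indicators
  set ind : ℕ → ℕ → Ω → ℝ := fun n i ω => if i < Y n ω then (1 : ℝ) else 0 with hinddef
  have hindmG : ∀ n i, Measurable[G n] (ind n i) := fun n i =>
    Measurable.ite ((hYmG n) (show MeasurableSet {k : ℕ | i < k} from trivial))
      measurable_const measurable_const
  have hindm : ∀ n i, Measurable (ind n i) := fun n i => (hindmG n i).mono (hGle n) le_rfl
  have hindb : ∀ n i ω, |ind n i ω| ≤ 1 := by
    intro n i ω
    by_cases h : i < Y n ω <;> simp [hinddef, h]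
  have hindint : ∀ n i, Integrable (ind n i) ℙ := fun n i => hInt _ _ (hindm n i) (hindb n i)
  have hindnn : ∀ n i ω, 0 ≤ ind n i ω := by
    intro n i ω; by_cases h : i < Y n ω <;> simp [hinddef, h]
  have hindsum : ∀ n ω, ∑ i ∈ Finset.range (K ^ n), ind n i ω = Yr n ω := by
    intro n ω
    rw [show (∑ i ∈ Finset.range (K ^ n), ind n i ω)
        = ∑ i ∈ Finset.range (K ^ n), (if i < Y n ω then (1 : ℝ) else 0) from rfl,
      sum_ite_lt' (hYbK n ω)]
    simp [hYrdef]
  -- independence facts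
  have hGZ : ∀ n i, Indep (G n) (mS (n, i)) ℙ := by
    intro n i
    have h := indep_iSup_of_disjoint (m := mS) h_le hindep.iIndep
      (S := {q : ℕ × ℕ | q.1 < n}) (T := {(n, i)})
      (by simp [Set.disjoint_singleton_right])
    simpa [hGdef] using h
  have hGZZ : ∀ n i j, i ≠ j → Indep (G n ⊔ mS (n, i)) (mS (n, j)) ℙ := by
    intro n i j hij
    have h := indep_iSup_of_disjoint (m := mS) h_le hindep.iIndep
      (S := insert (n, i) {q : ℕ × ℕ | q.1 < n}) (T := {(n, j)})
      (by simp [Set.disjoint_singleton_right, Prod.ext_iff]; exact hij.symm)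
    rw [iSup_insert] at h
    simpa [hGdef, sup_comm] using h
  -- pointwise expansion of Y (n+1) over indicators
  have hrow : ∀ n ω, Yr (n + 1) ω = ∑ i ∈ Finset.range (K ^ n), ind n i ω * Zr n i ω := by
    intro n ω
    rw [show Yr (n + 1) ω = ((Y (n + 1) ω : ℕ) : ℝ) from rfl, hYrec' n ω, Nat.cast_sum]
    refine Finset.sum_congr rfl fun i _ => ?_
    by_cases h : i < Y n ω <;> simp [hinddef, h, hZrdef]
  -- first moment recursion
  have hmean : ∀ n, ∫ ω, Yr (n + 1) ω = m * ∫ ω, Yr n ω := by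
    intro n
    calc ∫ ω, Yr (n + 1) ω
        = ∫ ω, ∑ i ∈ Finset.range (K ^ n), ind n i ω * Zr n i ω :=
          integral_congr_ae (ae_of_all _ (hrow n))
      _ = ∑ i ∈ Finset.range (K ^ n), ∫ ω, ind n i ω * Zr n i ω :=
          integral_finset_sum _ (fun i _ => hInt _ ((K : ℝ))
            ((hindm n i).mul (hZrm n i)) (fun ω => by
              rw [abs_mul]
              calc |ind n i ω| * |Zr n i ω| ≤ 1 * (K : ℝ) :=
                mul_le_mul (hindb n i ω) (hZrb n i ω) (abs_nonneg _) zero_le_one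
              _ = (K : ℝ) := one_mul _))
      _ = ∑ i ∈ Finset.range (K ^ n), (∫ ω, ind n i ω) * m := by
          refine Finset.sum_congr rfl fun i _ => ?_
          have hmul := (indep_indepFun_of_measurable (hGZ n i) (hindmG n i)
            (hZrmS n i)).integral_fun_mul_eq_mul_integral (hindint n i).aestronglyMeasurable (hZint n i).aestronglyMeasurable
          exact hmul.trans (by rw [hZmean n i])
      _ = m * ∑ i ∈ Finset.range (K ^ n), ∫ ω, ind n i ω := by
          rw [Finset.mul_sum]
          exact Finset.sum_congr rfl fun i _ => mul_comm _ _
      _ = m * ∫ ω, Yr n ω := by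
          rw [← integral_finset_sum _ (fun i _ => hindint n i)]
          congr 1
          exact integral_congr_ae (ae_of_all _ fun ω => hindsum n ω)
  have ha : ∀ n, ∫ ω, Yr n ω = m ^ n := by
    intro n
    induction n with
    | zero =>
      simp only [pow_zero]
      rw [show Yr 0 = fun _ => (1 : ℝ) from funext fun ω => by simp [hYrdef, hY0]]
      simp
    | succ n ih => rw [hmean n, ih, pow_succ, mul_comm]
  -- second moment recursion
  have hiijint : ∀ n i j, Integrable (fun ω => ind n i ω * ind n j ω) ℙ := fun n i j =>
    hInt _ 1 ((hindm n i).mul (hindm n j)) (fun ω => by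
      rw [abs_mul]
      nlinarith [hindb n i ω, hindb n j ω, abs_nonneg (ind n i ω), abs_nonneg (ind n j ω)])
  have hq2nn : ∀ n i j, 0 ≤ ∫ ω, ind n i ω * ind n j ω := fun n i j =>
    integral_nonneg fun ω => mul_nonneg (hindnn n i ω) (hindnn n j ω)
  have hsq : ∀ n, (∫ ω, Yr (n + 1) ω ^ 2)
      ≤ m ^ 2 * (∫ ω, Yr n ω ^ 2) + t * ∫ ω, Yr n ω := by
    intro n
    set M := K ^ n with hM
    have hrow2 : ∀ ω, Yr (n + 1) ω ^ 2 = ∑ i ∈ Finset.range M, ∑ j ∈ Finset.range M,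
        (ind n i ω * ind n j ω) * (Zr n i ω * Zr n j ω) := by
      intro ω
      rw [hrow n ω, sq, Finset.sum_mul_sum]
      exact Finset.sum_congr rfl fun i _ => Finset.sum_congr rfl fun j _ => by ring
    have hterm_int : ∀ i j, Integrable (fun ω =>
        (ind n i ω * ind n j ω) * (Zr n i ω * Zr n j ω)) ℙ := by
      intro i j
      refine hInt _ ((K : ℝ) * K)
        (((hindm n i).mul (hindm n j)).mul ((hZrm n i).mul (hZrm n j))) (fun ω => ?_)
      rw [abs_mul, abs_mul, abs_mul]
      have h1 : |ind n i ω| * |ind n j ω| ≤ 1 := by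
        nlinarith [hindb n i ω, hindb n j ω, abs_nonneg (ind n i ω), abs_nonneg (ind n j ω)]
      have h2 : |Zr n i ω| * |Zr n j ω| ≤ (K : ℝ) * K := by
        nlinarith [hZrb n i ω, hZrb n j ω, abs_nonneg (Zr n i ω), abs_nonneg (Zr n j ω),
          (Nat.cast_nonneg K : (0:ℝ) ≤ K)]
      calc (|ind n i ω| * |ind n j ω|) * (|Zr n i ω| * |Zr n j ω|)
          ≤ 1 * ((K : ℝ) * K) :=
            mul_le_mul h1 h2 (mul_nonneg (abs_nonneg _) (abs_nonneg _)) zero_le_one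
        _ = (K : ℝ) * K := one_mul _
    have hsplit : (∫ ω, Yr (n + 1) ω ^ 2) = ∑ i ∈ Finset.range M, ∑ j ∈ Finset.range M,
        ∫ ω, (ind n i ω * ind n j ω) * (Zr n i ω * Zr n j ω) := by
      rw [integral_congr_ae (ae_of_all _ hrow2),
        integral_finset_sum _ (fun i _ => integrable_finset_sum _ (fun j _ => hterm_int i j))]
      exact Finset.sum_congr rfl fun i _ => integral_finset_sum _ (fun j _ => hterm_int i j)
    have hoff : ∀ i j, i ≠ j → (∫ ω, (ind n i ω * ind n j ω) * (Zr n i ω * Zr n j ω))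
        = m ^ 2 * ∫ ω, ind n i ω * ind n j ω := by
      intro i j hij
      have hmul1 : Measurable[G n ⊔ mS (n, i)]
          (fun ω => (ind n i ω * ind n j ω) * Zr n i ω) := by
        have hii : Measurable[G n ⊔ mS (n, i)] (ind n i) := (hindmG n i).mono le_sup_left le_rfl
        have hjj : Measurable[G n ⊔ mS (n, i)] (ind n j) := (hindmG n j).mono le_sup_left le_rfl
        have hz : Measurable[G n ⊔ mS (n, i)] (Zr n i) := (hZrmS n i).mono le_sup_right le_rfl
        exact (hii.mul hjj).mul hz
      have hiijZint : Integrable (fun ω => (ind n i ω * ind n j ω) * Zr n i ω) ℙ :=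
        hInt _ (K : ℝ) (((hindm n i).mul (hindm n j)).mul (hZrm n i)) (fun ω => by
          rw [abs_mul, abs_mul]
          have hab : |ind n i ω| * |ind n j ω| ≤ 1 := by
            nlinarith [hindb n i ω, hindb n j ω, abs_nonneg (ind n i ω), abs_nonneg (ind n j ω)]
          calc |ind n i ω| * |ind n j ω| * |Zr n i ω| ≤ 1 * (K : ℝ) :=
              mul_le_mul hab (hZrb n i ω) (abs_nonneg _) zero_le_one
            _ = (K : ℝ) := one_mul _)
      calc ∫ ω, (ind n i ω * ind n j ω) * (Zr n i ω * Zr n j ω)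
          = ∫ ω, ((ind n i ω * ind n j ω) * Zr n i ω) * Zr n j ω :=
            integral_congr_ae (ae_of_all _ fun ω => by ring)
        _ = (∫ ω, (ind n i ω * ind n j ω) * Zr n i ω) * m := by
            have h1 := (indep_indepFun_of_measurable (hGZZ n i j hij) hmul1
              (hZrmS n j)).integral_fun_mul_eq_mul_integral hiijZint.aestronglyMeasurable (hZint n j).aestronglyMeasurable
            exact h1.trans (by rw [hZmean n j])
        _ = ((∫ ω, ind n i ω * ind n j ω) * m) * m := by
            have h2 := (indep_indepFun_of_measurable (hGZ n i)
              ((hindmG n i).mul (hindmG n j))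
              (hZrmS n i)).integral_fun_mul_eq_mul_integral (hiijint n i j).aestronglyMeasurable (hZint n i).aestronglyMeasurable
            exact congrArg (· * m) (h2.trans (by rw [hZmean n i]; rfl))
        _ = m ^ 2 * ∫ ω, ind n i ω * ind n j ω := by ring
    have hdiag : ∀ i, (∫ ω, (ind n i ω * ind n i ω) * (Zr n i ω * Zr n i ω))
        = t * ∫ ω, ind n i ω := by
      intro i
      have heq : ∀ ω, (ind n i ω * ind n i ω) * (Zr n i ω * Zr n i ω)
          = ind n i ω * Zr n i ω ^ 2 := by
        intro ω
        have h3 : ind n i ω * ind n i ω = ind n i ω := by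
          by_cases h : i < Y n ω <;> simp [hinddef, h]
        rw [h3, sq]
      have h1 := (indep_indepFun_of_measurable (hGZ n i) (hindmG n i)
        (hZr2mS n i)).integral_fun_mul_eq_mul_integral (hindint n i).aestronglyMeasurable (hZ2int n i).aestronglyMeasurable
      calc ∫ ω, (ind n i ω * ind n i ω) * (Zr n i ω * Zr n i ω)
          = ∫ ω, ind n i ω * Zr n i ω ^ 2 := integral_congr_ae (ae_of_all _ heq)
        _ = (∫ ω, ind n i ω) * t := h1.trans (by rw [hZsq n i])
        _ = t * ∫ ω, ind n i ω := mul_comm _ _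
    have hq2sum : (∑ i ∈ Finset.range M, ∑ j ∈ Finset.range M, ∫ ω, ind n i ω * ind n j ω)
        = ∫ ω, Yr n ω ^ 2 := by
      have e1 : ∀ i, (∑ j ∈ Finset.range M, ∫ ω, ind n i ω * ind n j ω)
          = ∫ ω, ∑ j ∈ Finset.range M, ind n i ω * ind n j ω :=
        fun i => (integral_finset_sum _ (fun j _ => hiijint n i j)).symm
      rw [Finset.sum_congr rfl (fun i _ => e1 i),
        ← integral_finset_sum _ (fun i (_ : i ∈ Finset.range M) =>
          integrable_finset_sum _ (fun j _ => hiijint n i j))]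
      refine integral_congr_ae (ae_of_all _ fun ω => ?_)
      show (∑ i ∈ Finset.range M, ∑ j ∈ Finset.range M, ind n i ω * ind n j ω)
        = Yr n ω ^ 2
      rw [← Finset.sum_mul_sum, hindsum n ω]
      ring
    have hqsum : (∑ i ∈ Finset.range M, ∫ ω, ind n i ω) = ∫ ω, Yr n ω := by
      rw [← integral_finset_sum _ (fun i _ => hindint n i)]
      exact integral_congr_ae (ae_of_all _ fun ω => hindsum n ω)
    rw [hsplit]
    calc (∑ i ∈ Finset.range M, ∑ j ∈ Finset.range M,
            ∫ ω, (ind n i ω * ind n j ω) * (Zr n i ω * Zr n j ω))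
        ≤ ∑ i ∈ Finset.range M, ∑ j ∈ Finset.range M,
            (m ^ 2 * (∫ ω, ind n i ω * ind n j ω)
              + if i = j then t * ∫ ω, ind n i ω else 0) := by
          refine Finset.sum_le_sum fun i _ => Finset.sum_le_sum fun j _ => ?_
          by_cases hij : i = j
          · subst hij
            rw [hdiag i, if_pos rfl]
            have h4 := mul_nonneg (sq_nonneg m) (hq2nn n i i)
            linarith
          · rw [hoff i j hij, if_neg hij, add_zero]
      _ = m ^ 2 * (∫ ω, Yr n ω ^ 2) + t * ∫ ω, Yr n ω := by
          rw [Finset.sum_congr rfl (fun i (_ : i ∈ Finset.range M) =>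
            Finset.sum_add_distrib), Finset.sum_add_distrib]
          congr 1
          · calc (∑ i ∈ Finset.range M, ∑ j ∈ Finset.range M,
                  m ^ 2 * (∫ ω, ind n i ω * ind n j ω))
                = m ^ 2 * ∑ i ∈ Finset.range M, ∑ j ∈ Finset.range M,
                    ∫ ω, ind n i ω * ind n j ω := by
                  rw [Finset.mul_sum]
                  exact Finset.sum_congr rfl fun i _ => by rw [Finset.mul_sum]
              _ = m ^ 2 * ∫ ω, Yr n ω ^ 2 := by rw [hq2sum]
          · calc (∑ i ∈ Finset.range M, ∑ j ∈ Finset.range M,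
                  (if i = j then t * ∫ ω, ind n i ω else 0))
                = ∑ i ∈ Finset.range M, t * ∫ ω, ind n i ω := by
                  refine Finset.sum_congr rfl fun i hi => ?_
                  rw [Finset.sum_ite_eq, if_pos hi]
              _ = t * ∫ ω, Yr n ω := by rw [← Finset.mul_sum, hqsum]
  -- second moment bound
  have hb : ∀ n, (∫ ω, Yr n ω ^ 2) ≤ (1 + t * n / m) * m ^ n := by
    intro n
    induction n with
    | zero =>
      rw [show (fun ω => Yr 0 ω ^ 2) = fun _ => (1 : ℝ) from
        funext fun ω => by simp [hYrdef, hY0]]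
      simp
    | succ n ih =>
      have h1 := hsq n
      have h2 : m ^ 2 * (∫ ω, Yr n ω ^ 2) + t * ∫ ω, Yr n ω
          ≤ m ^ 2 * ((1 + t * n / m) * m ^ n) + t * m ^ n := by
        rw [ha n]
        have h3 : m ^ 2 * (∫ ω, Yr n ω ^ 2) ≤ m ^ 2 * ((1 + t * n / m) * m ^ n) :=
          mul_le_mul_of_nonneg_left ih (sq_nonneg m)
        linarith
      refine h1.trans (h2.trans ?_)
      have hmn : (0 : ℝ) < m ^ n := pow_pos hm0 n
      have hnn : (0 : ℝ) ≤ (n : ℝ) := Nat.cast_nonneg n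
      have expand : m ^ 2 * ((1 + t * n / m) * m ^ n) = m ^ 2 * m ^ n + t * n * m * m ^ n := by
        field_simp
      have expand2 : (1 + t * (↑(n + 1) : ℝ) / m) * m ^ (n + 1)
          = m * m ^ n + t * ((n : ℝ) + 1) * m ^ n := by
        push_cast
        rw [pow_succ]
        field_simp
      rw [expand, expand2]
      nlinarith [mul_nonneg (mul_nonneg (mul_nonneg ht0 hnn) (by linarith : (0:ℝ) ≤ 1 - m)) hmn.le,
        mul_nonneg (mul_nonneg hm0.le (by linarith : (0:ℝ) ≤ 1 - m)) hmn.le]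
  -- positivity of the second moment
  have hbpos : ∀ n, 0 < ∫ ω, Yr n ω ^ 2 := by
    intro n
    have h1 : (∫ ω, Yr n ω) ≤ ∫ ω, Yr n ω ^ 2 := by
      refine integral_mono (hYint n) (hY2int n) fun ω => ?_
      have h2 : Y n ω ≤ Y n ω ^ 2 := Nat.le_self_pow two_ne_zero _
      show (Y n ω : ℝ) ≤ (Y n ω : ℝ) ^ 2
      exact_mod_cast h2
    calc (0 : ℝ) < m ^ n := pow_pos hm0 n
      _ = ∫ ω, Yr n ω := (ha n).symm
      _ ≤ _ := h1
  -- Paley–Zygmund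
  have hPZY : ∀ n, m ^ n / (1 + t * n / m) ≤ (ℙ {ω | 1 ≤ Y n ω}).toReal := by
    intro n
    set b := ∫ ω, Yr n ω ^ 2 with hbdef
    have hbp : 0 < b := hbpos n
    set θ := m ^ n / b with hθdef
    have hθ0 : 0 ≤ θ := div_nonneg (pow_pos hm0 n).le hbp.le
    have hA : MeasurableSet {ω | 1 ≤ Y n ω} :=
      (hYm n) (show MeasurableSet {k : ℕ | 1 ≤ k} from trivial)
    have key : ∀ ω, 2 * θ * Yr n ω - θ ^ 2 * Yr n ω ^ 2
        ≤ Set.indicator {ω | 1 ≤ Y n ω} (fun _ => (1 : ℝ)) ω := by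
      intro ω
      rcases Nat.eq_zero_or_pos (Y n ω) with h | h
      · have hy : Yr n ω = 0 := by rw [show Yr n ω = (Y n ω : ℝ) from rfl, h]; simp
        have hnm : ω ∉ {ω | 1 ≤ Y n ω} := by simp [Set.mem_setOf_eq, h]
        rw [Set.indicator_of_notMem hnm, hy]
        ring_nf
        simp
      · have hmem : ω ∈ {ω | 1 ≤ Y n ω} := h
        rw [Set.indicator_of_mem hmem]
        nlinarith [sq_nonneg (1 - θ * Yr n ω)]
    have hLint : Integrable (fun ω => 2 * θ * Yr n ω - θ ^ 2 * Yr n ω ^ 2) ℙ :=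
      ((hYint n).const_mul _).sub ((hY2int n).const_mul _)
    have hIint : Integrable (Set.indicator {ω | 1 ≤ Y n ω} (fun _ => (1 : ℝ))) ℙ :=
      (integrable_const 1).indicator hA
    have hmono := integral_mono hLint hIint key
    have hL : (∫ ω, (2 * θ * Yr n ω - θ ^ 2 * Yr n ω ^ 2)) = 2 * θ * m ^ n - θ ^ 2 * b := by
      rw [integral_sub ((hYint n).const_mul _) ((hY2int n).const_mul _),
        integral_const_mul, integral_const_mul, ha n, hbdef]
    have hR : (∫ ω, Set.indicator {ω | 1 ≤ Y n ω} (fun _ => (1 : ℝ)) ω)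
        = (ℙ {ω | 1 ≤ Y n ω}).toReal := by
      rw [integral_indicator_const (1 : ℝ) hA, smul_eq_mul, mul_one, measureReal_def]
    rw [hL, hR] at hmono
    have hval : 2 * θ * m ^ n - θ ^ 2 * b = (m ^ n) ^ 2 / b := by
      rw [hθdef]
      field_simp
      ring
    have hfin : m ^ n / (1 + t * n / m) ≤ (m ^ n) ^ 2 / b := by
      have hden : 0 < 1 + t * n / m := by positivity
      rw [div_le_div_iff₀ hden hbp]
      calc m ^ n * b ≤ m ^ n * ((1 + t * n / m) * m ^ n) :=
          mul_le_mul_of_nonneg_left (hb n) (pow_pos hm0 n).le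
        _ = (m ^ n) ^ 2 * (1 + t * n / m) := by ring
    rw [hval] at hmono
    exact hfin.trans hmono
  -- conclusion
  intro n
  refine (hPZY n).trans (ENNReal.toReal_mono (measure_ne_top _ _) (measure_mono ?_))
  exact fun ω hω => le_trans hω (hYleX n ω)

/-- Lemma 2.1: for a (sub)critical Galton–Watson process started from one particle,
`e^{δn} μ^{-n} P(Xₙ ≥ 1) → ∞`. The GW process is built from the i.i.d. offspring
variables `ξ n i` via the standard recursion. -/
theorem gw_survival_probability_subexponential {Ω : Type*} [MeasureSpace Ω]
    [IsProbabilityMeasure (ℙ : Measure Ω)]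
    (ξ : ℕ → ℕ → Ω → ℕ) (hξm : ∀ n i, Measurable (ξ n i))
    (hindep : iIndepFun (fun p : ℕ × ℕ => ξ p.1 p.2) ℙ)
    (hident : ∀ n i, IdentDistrib (ξ n i) (ξ 0 0) ℙ ℙ)
    (X : ℕ → Ω → ℕ)
    (hX0 : ∀ ω, X 0 ω = 1)
    (hXrec : ∀ n ω, X (n + 1) ω = ∑ i ∈ Finset.range (X n ω), ξ n i ω)
    (hintξ : Integrable (fun ω => (ξ 0 0 ω : ℝ)) ℙ)
    (μ : ℝ) (hμ : μ = ∫ ω, (ξ 0 0 ω : ℝ)) (hμmem : μ ∈ Set.Ioc (0 : ℝ) 1) :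
    ∀ δ > (0 : ℝ),
      Tendsto (fun n : ℕ =>
          Real.exp (δ * n) * μ⁻¹ ^ n * (ℙ {ω | 1 ≤ X n ω}).toReal)
        atTop atTop := by
  intro δ hδ
  have hμ0 : 0 < μ := hμmem.1
  have hμ1 : μ ≤ 1 := hμmem.2
  -- choose a truncation level K
  have hexp1 : Real.exp (-(δ / 2)) < 1 := Real.exp_lt_one_iff.mpr (by linarith)
  have hexp : μ * Real.exp (-(δ / 2)) < μ := by
    nlinarith [Real.exp_pos (-(δ / 2))]
  have htend : Tendsto (fun K : ℕ => ∫ ω, ((min (ξ 0 0 ω) K : ℕ) : ℝ)) atTop (nhds μ) := by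
    rw [hμ]
    refine tendsto_integral_of_dominated_convergence (fun ω => (ξ 0 0 ω : ℝ)) ?_ hintξ ?_ ?_
    · intro K
      exact ((measurable_from_top (f := fun k : ℕ => ((min k K : ℕ) : ℝ))).comp
        (hξm 0 0)).aestronglyMeasurable
    · intro K
      refine ae_of_all _ fun ω => ?_
      show ‖((min (ξ 0 0 ω) K : ℕ) : ℝ)‖ ≤ ((ξ 0 0 ω : ℕ) : ℝ)
      rw [Real.norm_eq_abs, abs_of_nonneg (Nat.cast_nonneg _)]
      exact_mod_cast min_le_left (ξ 0 0 ω) K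
    · refine ae_of_all _ fun ω => ?_
      refine tendsto_atTop_of_eventually_const (i₀ := ξ 0 0 ω) fun K hK => ?_
      rw [min_eq_left hK]
  obtain ⟨K, hK1, hK2⟩ :=
    ((htend.eventually (eventually_gt_nhds hexp)).and (eventually_ge_atTop 1)).exists
  set m : ℝ := ∫ ω, ((min (ξ 0 0 ω) K : ℕ) : ℝ) with hmdef
  set t : ℝ := ∫ ω, ((min (ξ 0 0 ω) K : ℕ) : ℝ) ^ 2 with htdef
  have hm0 : 0 < m := lt_trans (by positivity) hK1
  have hintmin : Integrable (fun ω => ((min (ξ 0 0 ω) K : ℕ) : ℝ)) ℙ := by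
    refine (integrable_const ((K : ℝ))).mono'
      (((measurable_from_top (f := fun k : ℕ => ((min k K : ℕ) : ℝ))).comp
        (hξm 0 0)).aestronglyMeasurable) (ae_of_all _ fun ω => ?_)
    rw [Real.norm_eq_abs, abs_of_nonneg (Nat.cast_nonneg _)]
    exact_mod_cast min_le_right (ξ 0 0 ω) K
  have hmμ : m ≤ μ := by
    rw [hmdef, hμ]
    refine integral_mono hintmin hintξ fun ω => ?_
    exact Nat.cast_le.mpr (min_le_left (ξ 0 0 ω) K)
  have hm1 : m ≤ 1 := hmμ.trans hμ1
  have ht0 : 0 ≤ t := integral_nonneg fun ω => sq_nonneg _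
  have hP := gw_aux ξ hξm hindep hident X hX0 hXrec K hK2 m t hmdef htdef hm0 hm1
  -- the comparison sequence
  have hrat : Real.exp (-(δ / 2)) ≤ m / μ := by
    rw [le_div_iff₀ hμ0]
    linarith [hK1]
  -- pointwise lower bound
  have hlow : ∀ n : ℕ, Real.exp (δ / 2 * n) / (1 + t * n / m)
      ≤ Real.exp (δ * n) * μ⁻¹ ^ n * (ℙ {ω | 1 ≤ X n ω}).toReal := by
    intro n
    have hD : (0 : ℝ) < 1 + t * n / m := by positivity
    have h1 : Real.exp (δ * n) * μ⁻¹ ^ n * (m ^ n / (1 + t * n / m))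
        ≤ Real.exp (δ * n) * μ⁻¹ ^ n * (ℙ {ω | 1 ≤ X n ω}).toReal := by
      refine mul_le_mul_of_nonneg_left (hP n) ?_
      positivity
    refine le_trans ?_ h1
    have h2 : Real.exp (-(δ / 2)) ^ n ≤ (m / μ) ^ n :=
      pow_le_pow_left₀ (Real.exp_pos _).le hrat n
    have h3 : Real.exp (δ / 2 * n) = Real.exp (δ * n) * Real.exp (-(δ / 2)) ^ n := by
      rw [← Real.exp_nat_mul, ← Real.exp_add]
      congr 1
      ring
    have h4 : Real.exp (δ / 2 * n) ≤ Real.exp (δ * n) * (m / μ) ^ n := by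
      rw [h3]
      exact mul_le_mul_of_nonneg_left h2 (Real.exp_pos _).le
    have h5 : Real.exp (δ * n) * μ⁻¹ ^ n * (m ^ n / (1 + t * n / m))
        = (Real.exp (δ * n) * (m / μ) ^ n) / (1 + t * n / m) := by
      rw [div_pow]
      field_simp
      ring_nf
      rw [← mul_pow, mul_inv_cancel₀ hμ0.ne', one_pow]
    rw [h5]
    exact (div_le_div_iff_of_pos_right hD).mpr h4
  -- the comparison sequence tends to infinity
  have hcomp : Tendsto (fun n : ℕ => Real.exp (δ / 2 * (n : ℝ)) / (δ / 2 * (n : ℝ)))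
      atTop atTop := by
    have h1 : Tendsto (fun x : ℝ => Real.exp x / x) atTop atTop := by
      simpa using Real.tendsto_exp_div_pow_atTop 1
    have h2 : Tendsto (fun n : ℕ => δ / 2 * (n : ℝ)) atTop atTop :=
      tendsto_natCast_atTop_atTop.const_mul_atTop (half_pos hδ)
    exact h1.comp h2
  have hc : (0 : ℝ) < δ / 2 / (1 + t / m) := by positivity
  have hg : Tendsto (fun n : ℕ => Real.exp (δ / 2 * n) / (1 + t * n / m)) atTop atTop := by
    refine tendsto_atTop_mono' atTop ?_ (hcomp.const_mul_atTop hc)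
    filter_upwards [eventually_ge_atTop 1] with n hn
    have hn1 : (1 : ℝ) ≤ (n : ℝ) := by exact_mod_cast hn
    have hnpos : (0 : ℝ) < (n : ℝ) := by linarith
    have key : 1 + t * n / m ≤ (1 + t / m) * n := by
      have e : t * (n : ℝ) / m = t / m * n := by ring
      rw [e]
      nlinarith [mul_nonneg (div_nonneg ht0 hm0.le) (by linarith : (0:ℝ) ≤ (n:ℝ))]
    have hP1 : (0 : ℝ) < 1 + t * n / m := by positivity
    have h1tm : (0 : ℝ) < 1 + t / m := by positivity
    have heq : δ / 2 / (1 + t / m) * (Real.exp (δ / 2 * n) / (δ / 2 * n))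
        = Real.exp (δ / 2 * n) / ((1 + t / m) * n) := by
      field_simp
    rw [heq]
    exact div_le_div_of_nonneg_left (Real.exp_pos _).le hP1 key
  exact tendsto_atTop_mono hlow hg
end

section
/- Let T > 0, let p ∈ ℕ, let 0 < τ̄₁ < … < τ̄ₚ < T, and for each j let Zⱼ, Z_{n,j} : ℝ → [0,∞) be functions vanishing on (-∞, 0) with Z_{n,j} → Zⱼ uniformly on [0,T] as n → ∞, each Zⱼ continuous. Let τ̄ⱼ⁽ⁿ⁾ → τ̄ⱼ for each j. Let λₙ : [0,T] → [0,T] be the continuous strictly increasing piecewise-linear bijections with λₙ(τ̄ⱼ) = τ̄ⱼ⁽ⁿ⁾ and λₙ(0)=0, λₙ(T)=T. Then sup_{t∈[0,T]} |sup_{j: τ̄ⱼ ≤ t} Z_{n,j}(λₙ(t) - τ̄ⱼ⁽ⁿ⁾) - sup_{j: τ̄ⱼ ≤ t} Zⱼ(t - τ̄ⱼ)| → 0 as n → ∞ (suprema over the empty set are 0). -/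
open Filter

private lemma real_iSup_ite (P : Prop) [Decidable P] (x : ℝ) :
    (⨆ _ : P, x) = if P then x else 0 := by
  by_cases h : P
  · rw [if_pos h]; exact ciSup_pos h
  · rw [if_neg h]
    haveI : IsEmpty P := ⟨h⟩
    rw [iSup_of_empty', Real.sSup_empty]

private lemma abs_ciSup_sub_ciSup_le {ι : Type*} [Fintype ι] [Nonempty ι]
    (f g : ι → ℝ) (c : ℝ) (h : ∀ j, |f j - g j| ≤ c) :
    |(⨆ j, f j) - ⨆ j, g j| ≤ c := by
  have hbf : BddAbove (Set.range f) := (Set.finite_range f).bddAbove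
  have hbg : BddAbove (Set.range g) := (Set.finite_range g).bddAbove
  rw [abs_sub_le_iff]
  constructor
  · rw [sub_le_iff_le_add]
    exact ciSup_le fun j => (by linarith [abs_le.1 (h j), le_ciSup hbg j] : f j ≤ c + ⨆ j, g j)
  · rw [sub_le_iff_le_add]
    exact ciSup_le fun j => (by linarith [abs_le.1 (h j), le_ciSup hbf j] : g j ≤ c + ⨆ j, f j)

/-- Deterministic lemma behind Step 4 of the proof of Theorem 1.1: time-changing by
the piecewise-linear maps `lam n` that align the nodes `τₙ(j)` with `τ(j)` makes the
finite maximum of uniformly convergent shot responses converge uniformly. -/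
theorem sup_shot_responses_uniform_convergence
    (T : ℝ) (hT : 0 < T) (p : ℕ)
    (τ : Fin p → ℝ) (hτmono : StrictMono τ) (hτmem : ∀ j, τ j ∈ Set.Ioo 0 T)
    (Z : Fin p → ℝ → ℝ) (Zn : ℕ → Fin p → ℝ → ℝ)
    (hZnn : ∀ j t, 0 ≤ Z j t) (hZnnn : ∀ n j t, 0 ≤ Zn n j t)
    (hZ0 : ∀ j t, t < 0 → Z j t = 0) (hZn0 : ∀ n j t, t < 0 → Zn n j t = 0)
    (hZcont : ∀ j, Continuous (Z j))
    (hunif : ∀ j, TendstoUniformlyOn (fun n => Zn n j) (Z j) atTop (Set.Icc 0 T))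
    (τn : ℕ → Fin p → ℝ)
    (hτn : ∀ j, Tendsto (fun n => τn n j) atTop (nhds (τ j)))
    (lam : ℕ → ℝ → ℝ)
    (hmaps : ∀ n, Set.MapsTo (lam n) (Set.Icc 0 T) (Set.Icc 0 T))
    (hcont : ∀ n, ContinuousOn (lam n) (Set.Icc 0 T))
    (hmono : ∀ n, StrictMonoOn (lam n) (Set.Icc 0 T))
    (h0 : ∀ n, lam n 0 = 0) (hTend : ∀ n, lam n T = T)
    (hnode : ∀ n j, lam n (τ j) = τn n j)
    (hlin : ∀ n, ∀ a ∈ Set.Icc (0 : ℝ) T, ∀ b ∈ Set.Icc (0 : ℝ) T, a < b →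
      (∀ j, τ j ∉ Set.Ioo a b) → ∀ θ ∈ Set.Icc (0 : ℝ) 1,
      lam n (a + θ * (b - a)) = lam n a + θ * (lam n b - lam n a)) :
    TendstoUniformlyOn
      (fun n t => ⨆ j, ⨆ (_ : τ j ≤ t), Zn n j (lam n t - τn n j))
      (fun t => ⨆ j, ⨆ (_ : τ j ≤ t), Z j (t - τ j))
      atTop (Set.Icc 0 T) := by
  classical
  -- total node error
  set δ : ℕ → ℝ := fun n => ∑ j, |τn n j - τ j| with hδdef
  have hδnn : ∀ n, 0 ≤ δ n := fun n => Finset.sum_nonneg fun j _ => abs_nonneg _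
  have hδ0 : Tendsto δ atTop (nhds 0) := by
    have h := tendsto_finset_sum (Finset.univ : Finset (Fin p))
      (fun j _ => ((hτn j).sub_const (τ j)).abs)
    simpa using h
  have hδj : ∀ n j, |τn n j - τ j| ≤ δ n := fun n j =>
    Finset.single_le_sum (f := fun j => |τn n j - τ j|) (fun j _ => abs_nonneg _)
      (Finset.mem_univ j)
  -- node set
  set S : Finset ℝ := insert 0 (insert T (Finset.image τ Finset.univ)) with hSdef
  have hEnode : ∀ n, ∀ s ∈ S, |lam n s - s| ≤ δ n := by
    intro n s hs
    simp only [hSdef, Finset.mem_insert, Finset.mem_image, Finset.mem_univ, true_and] at hs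
    rcases hs with rfl | rfl | ⟨j, rfl⟩
    · simpa [h0 n] using hδnn n
    · simpa [hTend n] using hδnn n
    · rw [hnode n j]; exact hδj n j
  have hmemS : ∀ s ∈ S, s ∈ Set.Icc (0:ℝ) T := by
    intro s hs
    simp only [hSdef, Finset.mem_insert, Finset.mem_image, Finset.mem_univ, true_and] at hs
    rcases hs with rfl | rfl | ⟨j, rfl⟩
    · exact ⟨le_refl _, hT.le⟩
    · exact ⟨hT.le, le_refl _⟩
    · exact ⟨(hτmem j).1.le, (hτmem j).2.le⟩
  -- uniform bound on |lam n t - t|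
  have hlam : ∀ n, ∀ t ∈ Set.Icc (0:ℝ) T, |lam n t - t| ≤ δ n := by
    intro n t ht
    by_cases htS : t ∈ S
    · exact hEnode n t htS
    · have h0S : (0:ℝ) ∈ S := by simp [hSdef]
      have hTS : T ∈ S := by simp [hSdef]
      have hA : (S.filter (· ≤ t)).Nonempty := ⟨0, Finset.mem_filter.2 ⟨h0S, ht.1⟩⟩
      have hB : (S.filter (t ≤ ·)).Nonempty := ⟨T, Finset.mem_filter.2 ⟨hTS, ht.2⟩⟩
      set a := (S.filter (· ≤ t)).max' hA with ha
      set b := (S.filter (t ≤ ·)).min' hB with hb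
      have haA := (S.filter (· ≤ t)).max'_mem hA
      have hbB := (S.filter (t ≤ ·)).min'_mem hB
      have haS : a ∈ S := (Finset.mem_filter.1 haA).1
      have hat : a ≤ t := (Finset.mem_filter.1 haA).2
      have hbS : b ∈ S := (Finset.mem_filter.1 hbB).1
      have htb : t ≤ b := (Finset.mem_filter.1 hbB).2
      have halt : a < t := lt_of_le_of_ne hat (fun h => htS (h ▸ haS))
      have hblt : t < b := lt_of_le_of_ne htb (fun h => htS (by rw [h]; exact hbS))
      have hnojump : ∀ j, τ j ∉ Set.Ioo a b := by
        intro j hj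
        have hjS : τ j ∈ S := by simp [hSdef]
        by_cases hjt : τ j ≤ t
        · have : τ j ≤ a :=
            Finset.le_max' (S.filter (· ≤ t)) (τ j) (Finset.mem_filter.2 ⟨hjS, hjt⟩)
          exact absurd this (not_le.2 hj.1)
        · have : b ≤ τ j :=
            Finset.min'_le (S.filter (t ≤ ·)) (τ j)
              (Finset.mem_filter.2 ⟨hjS, (not_le.1 hjt).le⟩)
          exact absurd this (not_le.2 hj.2)
      have hab : a < b := halt.trans hblt
      set θ := (t - a) / (b - a) with hθdef
      have hθ : θ ∈ Set.Icc (0:ℝ) 1 :=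
        ⟨div_nonneg (by linarith) (by linarith),
         (div_le_one (by linarith)).2 (by linarith)⟩
      have hteq : a + θ * (b - a) = t := by
        rw [hθdef, div_mul_cancel₀ _ (sub_ne_zero.2 hab.ne')]; ring
      have hval := hlin n a (hmemS a haS) b (hmemS b hbS) hab hnojump θ hθ
      rw [hteq] at hval
      have hea := hEnode n a haS
      have heb := hEnode n b hbS
      have h1 : lam n t - t = (1-θ)*(lam n a - a) + θ*(lam n b - b) := by
        rw [hval, ← hteq]; ring
      have h1θ : (0:ℝ) ≤ 1 - θ := by linarith [hθ.2]
      calc |lam n t - t| ≤ (1-θ)*|lam n a - a| + θ*|lam n b - b| := by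
            rw [h1]
            refine (abs_add_le _ _).trans ?_
            rw [abs_mul, abs_mul, abs_of_nonneg h1θ, abs_of_nonneg hθ.1]
        _ ≤ (1-θ)*δ n + θ*δ n :=
            add_le_add (mul_le_mul_of_nonneg_left hea h1θ)
              (mul_le_mul_of_nonneg_left heb hθ.1)
        _ = δ n := by ring
  by_cases hp : p = 0
  · haveI : IsEmpty (Fin p) := ⟨fun j => absurd j.isLt (by omega)⟩
    simp only [iSup_of_empty', Real.sSup_empty]
    rw [Metric.tendstoUniformlyOn_iff]
    intro ε hε
    filter_upwards with n t ht
    simpa using hε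
  · haveI : Nonempty (Fin p) := ⟨⟨0, Nat.pos_of_ne_zero hp⟩⟩
    rw [Metric.tendstoUniformlyOn_iff]
    intro ε hε
    -- uniform continuity moduli
    have huc : ∀ j : Fin p, ∃ d > 0, ∀ x ∈ Set.Icc (0:ℝ) T, ∀ y ∈ Set.Icc (0:ℝ) T,
        dist x y < d → dist (Z j x) (Z j y) < ε/4 := by
      intro j
      have h := (isCompact_Icc (a := (0:ℝ)) (b := T)).uniformContinuousOn_of_continuous
        ((hZcont j).continuousOn)
      rw [Metric.uniformContinuousOn_iff] at h
      exact h (ε/4) (by linarith)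
    choose d hd hucd using huc
    have hev : ∀ᶠ n in atTop, ∀ j : Fin p,
        2 * δ n < d j ∧ ∀ x ∈ Set.Icc (0:ℝ) T, dist (Z j x) (Zn n j x) < ε/4 := by
      rw [eventually_all]
      intro j
      have h1 : ∀ᶠ n in atTop, 2 * δ n < d j := by
        have h2 : Tendsto (fun n => 2 * δ n) atTop (nhds (2 * 0)) := hδ0.const_mul 2
        rw [mul_zero] at h2
        exact h2.eventually_lt_const (hd j)
      have h2 := Metric.tendstoUniformlyOn_iff.1 (hunif j) (ε/4) (by linarith)
      exact h1.and h2
    filter_upwards [hev] with n hn t ht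
    have key : ∀ j : Fin p,
        |(if τ j ≤ t then Z j (t - τ j) else 0)
          - (if τ j ≤ t then Zn n j (lam n t - τn n j) else 0)| ≤ ε/2 := by
      intro j
      by_cases hjt : τ j ≤ t
      · simp only [if_pos hjt]
        have hτj0 : 0 < τ j := (hτmem j).1
        have hs : t - τ j ∈ Set.Icc (0:ℝ) T := ⟨by linarith, by linarith [ht.2]⟩
        have hlt := hmaps n ht
        have hτjmem : τ j ∈ Set.Icc (0:ℝ) T := ⟨hτj0.le, (hτmem j).2.le⟩
        have hτnj : τn n j ∈ Set.Icc (0:ℝ) T := by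
          rw [← hnode n j]; exact hmaps n hτjmem
        have hle : lam n (τ j) ≤ lam n t := ((hmono n).monotoneOn) hτjmem ht hjt
        rw [hnode n j] at hle
        have hsn : lam n t - τn n j ∈ Set.Icc (0:ℝ) T :=
          ⟨by linarith, by linarith [hlt.2, hτnj.1]⟩
        have hdist : dist (t - τ j) (lam n t - τn n j) < d j := by
          rw [Real.dist_eq]
          have heq : (t - τ j) - (lam n t - τn n j) = (τn n j - τ j) - (lam n t - t) := by ring
          calc |(t - τ j) - (lam n t - τn n j)|
              ≤ |τn n j - τ j| + |lam n t - t| := by rw [heq]; exact abs_sub _ _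
            _ ≤ δ n + δ n := add_le_add (hδj n j) (hlam n t ht)
            _ < d j := by linarith [(hn j).1]
        have hZZ : dist (Z j (t - τ j)) (Z j (lam n t - τn n j)) < ε/4 :=
          hucd j _ hs _ hsn hdist
        have hZn' : dist (Z j (lam n t - τn n j)) (Zn n j (lam n t - τn n j)) < ε/4 :=
          (hn j).2 _ hsn
        rw [Real.dist_eq] at hZZ hZn'
        calc |Z j (t - τ j) - Zn n j (lam n t - τn n j)|
            ≤ |Z j (t - τ j) - Z j (lam n t - τn n j)|
              + |Z j (lam n t - τn n j) - Zn n j (lam n t - τn n j)| := abs_sub_le _ _ _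
          _ ≤ ε/2 := by linarith
      · simp only [if_neg hjt, sub_zero, abs_zero]
        positivity
    have hrw1 : (⨆ j, ⨆ (_ : τ j ≤ t), Z j (t - τ j))
        = ⨆ j, (if τ j ≤ t then Z j (t - τ j) else 0) :=
      iSup_congr fun j => real_iSup_ite _ _
    have hrw2 : (⨆ j, ⨆ (_ : τ j ≤ t), Zn n j (lam n t - τn n j))
        = ⨆ j, (if τ j ≤ t then Zn n j (lam n t - τn n j) else 0) :=
      iSup_congr fun j => real_iSup_ite _ _
    rw [Real.dist_eq]
    simp only [hrw1, hrw2]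
    exact lt_of_le_of_lt (abs_ciSup_sub_ciSup_le _ _ (ε/2) key) (by linarith)
end
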